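/- Let Q be a self-adjoint contraction on L²(π) with spectral measure μ_g associated to g ∈ L²₀(π), and define σ_n² = (2⟨g,V̄_n g⟩ - ‖g‖²)n. If liminf_{n→∞} σ_n²/n < ∞, then ∫ dμ_g(λ)/(1-λ) < ∞ and lim_{n→∞} σ_n²/n = ∫ (1+λ)/(1-λ) dμ_g(λ) ∈ [0,∞). -/

import Mathlib

open MeasureTheory Filter Finset Topology
open scoped ENNReal RealInnerProductSpace

noncomputable def fn (n : ℕ) (l : ℝ) : ℝ :=
  2 * (n : ℝ)⁻¹ * (∑ k ∈ Finset.range n, ((n:ℝ) - k) * l ^ k) - 1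

noncomputable def flim (l : ℝ) : ℝ := (1 + l) / (1 - l)

lemma sum_identity (l : ℝ) (n : ℕ) :
    (1 - l)^2 * ∑ k ∈ Finset.range n, ((n:ℝ) - k) * l^k
      = n * (1-l) - l * (1 - l^n) := by
  induction n with
  | zero => simp
  | succ n ih =>
    have hsplit : ∑ k ∈ Finset.range (n+1), (((n:ℕ)+1:ℝ) - k) * l^k
        = (∑ k ∈ Finset.range n, ((n:ℝ) - k) * l^k)
          + ∑ k ∈ Finset.range (n+1), l^k := by
      have h1 : ∀ k : ℕ, (((n:ℕ)+1:ℝ) - k) * l^k = ((n:ℝ) - k) * l^k + l^k := by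
        intro k; ring
      simp_rw [h1, Finset.sum_add_distrib]
      rw [Finset.sum_range_succ (fun k => ((n:ℝ) - (k:ℝ)) * l^k)]
      simp
    have hgeom : (1 - l) * ∑ k ∈ Finset.range (n+1), l^k = 1 - l^(n+1) := by
      linear_combination -(geom_sum_mul l (n+1))
    push_cast
    push_cast at hsplit
    rw [hsplit]
    push_cast at ih
    linear_combination ih + (1-l)*hgeom

lemma fn_closed {n : ℕ} (hn : 1 ≤ n) {l : ℝ} (hl : l ≠ 1) :
    fn n l = flim l - 2*l*(1 - l^n)/(n*(1-l)^2) := by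
  have h1 : (1:ℝ) - l ≠ 0 := sub_ne_zero.2 (Ne.symm hl)
  have hn' : (n:ℝ) ≠ 0 := Nat.cast_ne_zero.2 (by omega)
  have hid := sum_identity l n
  have hS : ∑ k ∈ Finset.range n, ((n:ℝ) - k) * l^k
      = ((n:ℝ) * (1-l) - l * (1 - l^n)) / (1-l)^2 := by
    rw [eq_div_iff (by positivity)]
    linear_combination hid
  unfold fn flim
  rw [hS]
  field_simp
  ring

lemma corr_abs_le {n : ℕ} (hn : 1 ≤ n) {l : ℝ} (hl : l ∈ Set.Ico (-1:ℝ) 1) :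
    |2*l*(1 - l^n)/(n*(1-l)^2)| ≤ 4 / ((1-l)^2 * n) := by
  have h1 : (0:ℝ) < 1 - l := by linarith [hl.2]
  have hn0 : (0:ℝ) < n := by exact_mod_cast Nat.pos_of_ne_zero (by omega)
  have hla : |l| ≤ 1 := abs_le.2 ⟨hl.1, hl.2.le⟩
  have hln : |l^n| ≤ 1 := by rw [abs_pow]; exact pow_le_one₀ (abs_nonneg l) hla
  have hnum : |2*l*(1 - l^n)| ≤ 4 := by
    rw [abs_mul, abs_mul]
    have : |1 - l^n| ≤ 2 := by
      calc |1 - l^n| ≤ |(1:ℝ)| + |l^n| := abs_sub _ _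
        _ ≤ 2 := by rw [abs_one]; linarith
    rw [abs_two]
    nlinarith [abs_nonneg l, abs_nonneg (1 - l^n)]
  rw [abs_div]
  have hden : |(n:ℝ)*(1-l)^2| = (1-l)^2 * n := by
    rw [abs_of_pos (by positivity)]; ring
  rw [hden]
  exact (div_le_div_iff_of_pos_right (by positivity)).2 hnum

lemma flim_nonneg {l : ℝ} (hl : l ∈ Set.Ico (-1:ℝ) 1) : 0 ≤ flim l := by
  have h1 : (0:ℝ) < 1 - l := by linarith [hl.2]
  exact div_nonneg (by linarith [hl.1]) h1.le

lemma fn_le {n : ℕ} (hn : 1 ≤ n) {l : ℝ} (hl : l ∈ Set.Ico (-1:ℝ) 1) :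
    fn n l ≤ flim l + 4 := by
  have h1 : (0:ℝ) < 1 - l := by linarith [hl.2]
  have hn0 : (0:ℝ) < n := by exact_mod_cast Nat.pos_of_ne_zero (by omega)
  rw [fn_closed hn (by linarith [hl.2] : l ≠ 1)]
  rcases le_or_gt 0 l with h0 | h0
  · have hln : l^n ≤ 1 := pow_le_one₀ h0 hl.2.le
    have : 0 ≤ 2*l*(1 - l^n)/(n*(1-l)^2) := by
      apply div_nonneg (by nlinarith) (by positivity)
    linarith
  · have hden : (1:ℝ) ≤ (1-l)^2 * n := by
      have : (1:ℝ) ≤ (1-l)^2 := by nlinarith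
      have h2 : (1:ℝ) ≤ (n:ℝ) := by exact_mod_cast hn
      nlinarith
    have := corr_abs_le hn hl
    have h4 : 4 / ((1-l)^2 * n) ≤ 4 := by
      rw [div_le_iff₀ (by positivity)]; nlinarith
    have := abs_le.1 this
    linarith [this.1]

lemma fn_ge {n : ℕ} (hn : 1 ≤ n) {l : ℝ} (hl : l ∈ Set.Ico (-1:ℝ) 1) :
    -4 ≤ fn n l := by
  have h1 : (0:ℝ) < 1 - l := by linarith [hl.2]
  have hn0 : (0:ℝ) < n := by exact_mod_cast Nat.pos_of_ne_zero (by omega)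
  rcases le_or_gt 0 l with h0 | h0
  · have : 0 ≤ ∑ k ∈ Finset.range n, ((n:ℝ) - k) * l ^ k := by
      apply Finset.sum_nonneg
      intro k hk
      have : (k:ℝ) ≤ n := by exact_mod_cast (Finset.mem_range.1 hk).le
      have := pow_nonneg h0 k
      nlinarith
    unfold fn
    nlinarith [mul_nonneg (by positivity : (0:ℝ) ≤ 2 * (n:ℝ)⁻¹) this]
  · rw [fn_closed hn (by linarith [hl.2] : l ≠ 1)]
    have hden : (1:ℝ) ≤ (1-l)^2 * n := by
      have : (1:ℝ) ≤ (1-l)^2 := by nlinarith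
      have h2 : (1:ℝ) ≤ (n:ℝ) := by exact_mod_cast hn
      nlinarith
    have := corr_abs_le hn hl
    have h4 : 4 / ((1-l)^2 * n) ≤ 4 := by
      rw [div_le_iff₀ (by positivity)]; nlinarith
    have habs := abs_le.1 this
    have := flim_nonneg hl
    linarith [habs.2]

lemma fn_abs_le {n : ℕ} {l : ℝ} (hl : l ∈ Set.Ico (-1:ℝ) 1) :
    |fn n l| ≤ flim l + 4 := by
  rcases Nat.eq_zero_or_pos n with h | hn
  · subst h
    have := flim_nonneg hl
    simp [fn]
    linarith
  · have := flim_nonneg hl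
    exact abs_le.2 ⟨by linarith [fn_ge hn hl], fn_le hn hl⟩

lemma fn_tendsto {l : ℝ} (hl : l ∈ Set.Ico (-1:ℝ) 1) :
    Tendsto (fun n : ℕ => fn n l) atTop (𝓝 (flim l)) := by
  have h1 : (0:ℝ) < 1 - l := by linarith [hl.2]
  have h0 : Tendsto (fun n : ℕ => (4/(1-l)^2) / n) atTop (𝓝 0) :=
    tendsto_const_div_atTop_nhds_zero_nat _
  have hsq : Tendsto (fun n : ℕ => fn n l - flim l) atTop (𝓝 0) := by
    apply squeeze_zero_norm' ?_ h0
    filter_upwards [eventually_ge_atTop 1] with n hn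
    rw [fn_closed hn (by linarith [hl.2] : l ≠ 1)]
    have := corr_abs_le hn hl
    rw [Real.norm_eq_abs]
    have heq : flim l - 2*l*(1 - l^n)/(n*(1-l)^2) - flim l
        = -(2*l*(1 - l^n)/(n*(1-l)^2)) := by ring
    rw [heq, abs_neg]
    calc |2*l*(1 - l^n)/(n*(1-l)^2)|
        ≤ 4 / ((1-l)^2 * n) := this
      _ = 4/(1-l)^2 / n := (div_div 4 ((1-l)^2) (n:ℝ)).symm
  have := hsq.add_const (flim l)
  simpa using this

lemma fn_one {n : ℕ} (hn : 1 ≤ n) : fn n 1 = n := by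
  have hn' : (n:ℝ) ≠ 0 := Nat.cast_ne_zero.2 (by omega)
  have hs : ∑ k ∈ Finset.range n, ((n:ℝ) - k) * (1:ℝ) ^ k
      = (n:ℝ)*n - (n:ℝ)*(n-1)/2 := by
    simp only [one_pow, mul_one]
    rw [Finset.sum_sub_distrib, Finset.sum_const, Finset.card_range]
    have : ∑ k ∈ Finset.range n, (k:ℝ) = (n:ℝ)*(n-1)/2 := by
      have := Finset.sum_range_id_mul_two n
      have h2 : ((∑ i ∈ Finset.range n, i) * 2 : ℕ) = (n * (n-1) : ℕ) := this
      have h3 : ((∑ i ∈ Finset.range n, i : ℕ) : ℝ) * 2 = ((n*(n-1):ℕ):ℝ) := by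
        exact_mod_cast congrArg (Nat.cast : ℕ → ℝ) h2
      rw [Nat.cast_mul, Nat.cast_sub (by omega : 1 ≤ n)] at h3
      push_cast at h3 ⊢
      linarith
    rw [this]
    push_cast
    ring
  unfold fn
  rw [hs]
  field_simp
  ring

lemma meas_fn (n : ℕ) : Measurable (fn n) := by
  unfold fn; fun_prop

lemma meas_flim : Measurable flim := by
  unfold flim
  exact (measurable_const.add measurable_id).div (measurable_const.sub measurable_id)

lemma fn_crude (n : ℕ) {l : ℝ} (hl : l ∈ Set.Icc (-1:ℝ) 1) :
    |fn n l| ≤ 2*n+1 := by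
  rcases Nat.eq_zero_or_pos n with h | hn
  · subst h; simp [fn]
  have hn0 : (0:ℝ) < n := by exact_mod_cast hn
  have hla : |l| ≤ 1 := abs_le.2 ⟨hl.1, hl.2⟩
  have hS : |∑ k ∈ Finset.range n, ((n:ℝ) - k) * l ^ k| ≤ (n:ℝ)*n := by
    calc |∑ k ∈ Finset.range n, ((n:ℝ) - k) * l ^ k|
        ≤ ∑ k ∈ Finset.range n, |((n:ℝ) - k) * l ^ k| := Finset.abs_sum_le_sum_abs _ _
      _ ≤ ∑ k ∈ Finset.range n, (n:ℝ) := by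
          apply Finset.sum_le_sum
          intro k hk
          have hk' : (k:ℝ) ≤ (n:ℝ) := by exact_mod_cast (Finset.mem_range.1 hk).le
          have hk0 : (0:ℝ) ≤ (k:ℝ) := Nat.cast_nonneg k
          rw [abs_mul, abs_pow]
          have h1 : |(n:ℝ) - k| ≤ n := by rw [abs_of_nonneg (by linarith)]; linarith
          have h2 : |l|^k ≤ 1 := pow_le_one₀ (abs_nonneg l) hla
          nlinarith [abs_nonneg ((n:ℝ) - k)]
      _ = (n:ℝ)*n := by rw [Finset.sum_const, Finset.card_range]; ring
  unfold fn
  have h3 : |2 * (n:ℝ)⁻¹ * ∑ k ∈ Finset.range n, ((n:ℝ) - k) * l ^ k| ≤ 2*n := by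
    rw [abs_mul]
    have h4 : |2 * (n:ℝ)⁻¹| = 2 * (n:ℝ)⁻¹ := abs_of_pos (by positivity)
    rw [h4]
    calc 2 * (n:ℝ)⁻¹ * |∑ k ∈ Finset.range n, ((n:ℝ) - k) * l ^ k|
        ≤ 2 * (n:ℝ)⁻¹ * ((n:ℝ)*n) := by
          apply mul_le_mul_of_nonneg_left hS (by positivity)
      _ = 2*n := by field_simp
  calc |2 * (n:ℝ)⁻¹ * (∑ k ∈ Finset.range n, ((n:ℝ) - k) * l ^ k) - 1|
      ≤ |2 * (n:ℝ)⁻¹ * ∑ k ∈ Finset.range n, ((n:ℝ) - k) * l ^ k| + |(1:ℝ)| := abs_sub _ _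
    _ ≤ 2*n+1 := by rw [abs_one]; linarith

/-- with `σ_n² = (2⟨g, V̄_n g⟩ - ‖g‖²) n` and `μ = μ_g` the spectral
measure of `g` for the self-adjoint contraction `Q`, if `liminf σ_n²/n < ∞`
(i.e. `σ_n²/n ≤ C` frequently), then `∫ dμ(λ)/(1-λ) < ∞` and
`σ_n²/n → ∫ (1+λ)/(1-λ) dμ(λ)`. -/
theorem limit_of_variance_over_n
    {E : Type*} [NormedAddCommGroup E] [InnerProductSpace ℝ E]
    (Q : E →L[ℝ] E) (hsa : ∀ x y : E, ⟪Q x, y⟫ = ⟪x, Q y⟫) (hQ : ‖Q‖ ≤ 1)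
    (g : E) (μ : Measure ℝ) [IsFiniteMeasure μ]
    (hsupp : μ (Set.Icc (-1 : ℝ) 1)ᶜ = 0)
    (hmom : ∀ k : ℕ, ⟪g, (Q ^ k) g⟫ = ∫ l, l ^ k ∂μ)
    (σsq : ℕ → ℝ)
    (hσdef : ∀ n : ℕ, σsq n
      = (2 * ⟪g, (((n : ℝ)⁻¹ • ∑ k ∈ Finset.range n, ((n : ℝ) - k) • (Q ^ k)) g)⟫
          - ‖g‖ ^ 2) * n)
    (hliminf : ∃ C : ℝ, ∃ᶠ n in atTop, σsq n / n ≤ C) :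
    (∫⁻ l, (ENNReal.ofReal (1 - l))⁻¹ ∂μ < ⊤) ∧
    Tendsto (fun n : ℕ => σsq n / n) atTop (𝓝 (∫ l, (1 + l) / (1 - l) ∂μ)) := by
  set T : ℝ := (μ Set.univ).toReal with hT
  have hIcc : ∀ᵐ l ∂μ, l ∈ Set.Icc (-1:ℝ) 1 := mem_ae_iff.mpr hsupp
  -- integrability of bounded measurable functions
  have hint : ∀ (f : ℝ → ℝ), Measurable f → ∀ B : ℝ,
      (∀ x ∈ Set.Icc (-1:ℝ) 1, |f x| ≤ B) → Integrable f μ := by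
    intro f hf B hB
    refine Integrable.mono' (integrable_const B) hf.aestronglyMeasurable ?_
    filter_upwards [hIcc] with x hx
    simpa using hB x hx
  have hIk : ∀ k : ℕ, Integrable (fun l => l^k) μ := by
    intro k
    refine hint _ (by fun_prop) 1 ?_
    intro x hx
    rw [abs_pow]
    exact pow_le_one₀ (abs_nonneg _) (abs_le.2 ⟨hx.1, hx.2⟩)
  have hIfn : ∀ n : ℕ, Integrable (fn n) μ :=
    fun n => hint _ (meas_fn n) (2*n+1) (fun x hx => fn_crude n hx)
  -- σsq n / n = ∫ fn n
  have hσ : ∀ n : ℕ, 1 ≤ n → σsq n / n = ∫ l, fn n l ∂μ := by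
    intro n hn
    have hn' : (n:ℝ) ≠ 0 := Nat.cast_ne_zero.2 (by omega)
    rw [hσdef n, mul_div_assoc, div_self hn', mul_one]
    have happ : (((n : ℝ)⁻¹ • ∑ k ∈ Finset.range n, ((n : ℝ) - k) • (Q ^ k)) g)
        = (n:ℝ)⁻¹ • ∑ k ∈ Finset.range n, ((n:ℝ) - k) • ((Q ^ k) g) := by
      simp [ContinuousLinearMap.sum_apply]
    rw [happ, real_inner_smul_right, inner_sum]
    simp_rw [real_inner_smul_right, hmom]
    have hg : ‖g‖^2 = ∫ l, (1:ℝ) ∂μ := by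
      rw [← real_inner_self_eq_norm_sq]
      have h0 := hmom 0
      simp only [pow_zero, ContinuousLinearMap.one_apply] at h0
      simpa using h0
    have hI : ∫ l, fn n l ∂μ
        = 2*(n:ℝ)⁻¹ * (∑ k ∈ Finset.range n, ((n:ℝ)-k) * ∫ l, l^k ∂μ)
          - ∫ l, (1:ℝ) ∂μ := by
      unfold fn
      rw [integral_sub ?_ (integrable_const 1)]
      · rw [integral_const_mul, integral_finset_sum]
        · simp_rw [integral_const_mul]
        · exact fun k _ => (hIk k).const_mul _
      · apply Integrable.const_mul
        exact integrable_finset_sum _ (fun k _ => (hIk k).const_mul _)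
    rw [hI, hg]
    ring
  obtain ⟨C, hfreq⟩ := hliminf
  -- no atom at 1
  have hone : μ {(1:ℝ)} = 0 := by
    by_contra hμ1
    have ha : 0 < (μ {(1:ℝ)}).toReal := ENNReal.toReal_pos hμ1 (measure_ne_top μ _)
    set a := (μ {(1:ℝ)}).toReal with haa
    have hlow : ∀ n : ℕ, 1 ≤ n → (n:ℝ)*a - 4*T ≤ ∫ l, fn n l ∂μ := by
      intro n hn
      have hms : MeasurableSet ({(1:ℝ)} : Set ℝ) := measurableSet_singleton 1
      have hsplit := integral_add_compl hms (hIfn n)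
      have h1 : ∫ l in {(1:ℝ)}, fn n l ∂μ = a * n := by
        rw [integral_singleton, fn_one hn, smul_eq_mul]; rfl
      have h2 : -(4*T) ≤ ∫ l in {(1:ℝ)}ᶜ, fn n l ∂μ := by
        have hmono : ∫ l in {(1:ℝ)}ᶜ, (-4:ℝ) ∂μ ≤ ∫ l in {(1:ℝ)}ᶜ, fn n l ∂μ := by
          apply integral_mono_ae (integrable_const _) ((hIfn n).restrict)
          filter_upwards [ae_restrict_of_ae hIcc, ae_restrict_mem hms.compl]
            with l hl hlc
          exact fn_ge hn ⟨hl.1, lt_of_le_of_ne hl.2 hlc⟩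
        have hcval : ∫ l in {(1:ℝ)}ᶜ, (-4:ℝ) ∂μ = -4 * (μ {(1:ℝ)}ᶜ).toReal := by
          rw [setIntegral_const, smul_eq_mul, measureReal_def]; ring
        have hle : (μ {(1:ℝ)}ᶜ).toReal ≤ T := by
          apply ENNReal.toReal_mono (measure_ne_top μ _)
          exact measure_mono (Set.subset_univ _)
        rw [hcval] at hmono
        nlinarith
      nlinarith [hsplit, h1, h2]
    obtain ⟨m, hm⟩ := exists_nat_gt ((C + 4*T)/a)
    obtain ⟨n, hnge, hnC⟩ := (frequently_atTop.1 hfreq) (max 1 m)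
    have hn1 : 1 ≤ n := le_trans (le_max_left 1 m) hnge
    have hnm : (m:ℝ) ≤ (n:ℝ) := by exact_mod_cast le_trans (le_max_right 1 m) hnge
    have : (C + 4*T)/a < (n:ℝ) := lt_of_lt_of_le hm hnm
    have hCn : C + 4*T < (n:ℝ)*a := by
      rw [div_lt_iff₀ ha] at this; linarith
    have := hlow n hn1
    rw [← hσ n hn1] at this
    linarith
  have hae : ∀ᵐ l ∂μ, l ∈ Set.Ico (-1:ℝ) 1 := by
    have h1 : ∀ᵐ l ∂μ, l ≠ 1 := by
      rw [ae_iff]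
      have hset : {x : ℝ | ¬ x ≠ 1} = {1} := by ext x; simp
      rw [hset]; exact hone
    filter_upwards [hIcc, h1] with l h h'
    exact ⟨h.1, lt_of_le_of_ne h.2 h'⟩
  -- lintegral bound for each n ≥ 1 with σ/n ≤ C
  have hlin : ∀ n : ℕ, 1 ≤ n → σsq n / n ≤ C →
      ∫⁻ l, ENNReal.ofReal (fn n l + 4) ∂μ ≤ ENNReal.ofReal (C + 4*T) := by
    intro n hn hC
    have hInt : Integrable (fun l => fn n l + 4) μ := (hIfn n).add (integrable_const 4)
    have hnn : 0 ≤ᵐ[μ] (fun l => fn n l + 4) := by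
      filter_upwards [hae] with l hl
      have := fn_ge hn hl; simp; linarith
    rw [← ofReal_integral_eq_lintegral_ofReal hInt hnn]
    apply ENNReal.ofReal_le_ofReal
    rw [integral_add (hIfn n) (integrable_const 4), integral_const, smul_eq_mul, measureReal_def]
    rw [← hσ n hn]
    nlinarith [hσ n hn]
  -- subsequence
  obtain ⟨φ, hφmono, hφC⟩ := extraction_of_frequently_atTop hfreq
  set ψ : ℕ → ℕ := fun n => φ (n+1) with hψdef
  have hψ1 : ∀ n, 1 ≤ ψ n := fun n => le_trans (by omega) (hφmono.le_apply)
  have hψtend : Tendsto ψ atTop atTop :=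
    hφmono.tendsto_atTop.comp (tendsto_add_atTop_nat 1)
  have hKey : ∫⁻ l, ENNReal.ofReal (flim l + 4) ∂μ ≤ ENNReal.ofReal (C + 4*T) := by
    have hstep : ∫⁻ l, ENNReal.ofReal (flim l + 4) ∂μ
        = ∫⁻ l, liminf (fun n => ENNReal.ofReal (fn (ψ n) l + 4)) atTop ∂μ := by
      apply lintegral_congr_ae
      filter_upwards [hae] with l hl
      symm
      apply Tendsto.liminf_eq
      have h1 : Tendsto (fun n => fn (ψ n) l + 4) atTop (𝓝 (flim l + 4)) :=
        Tendsto.add_const 4 ((fn_tendsto hl).comp hψtend)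
      exact (ENNReal.continuous_ofReal.tendsto _).comp h1
    rw [hstep]
    calc ∫⁻ l, liminf (fun n => ENNReal.ofReal (fn (ψ n) l + 4)) atTop ∂μ
        ≤ liminf (fun n => ∫⁻ l, ENNReal.ofReal (fn (ψ n) l + 4) ∂μ) atTop :=
          lintegral_liminf_le (fun n => ((meas_fn (ψ n)).add measurable_const).ennreal_ofReal)
      _ ≤ ENNReal.ofReal (C + 4*T) := by
          apply le_trans (liminf_le_liminf (Eventually.of_forall
            (fun n => hlin (ψ n) (hψ1 n) (hφC (n+1)))))
          simp [liminf_const]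
  constructor
  · -- finiteness
    have hmono : ∫⁻ l, (ENNReal.ofReal (1 - l))⁻¹ ∂μ
        ≤ ∫⁻ l, ENNReal.ofReal (flim l + 4) ∂μ := by
      apply lintegral_mono_ae
      filter_upwards [hae] with l hl
      have h1 : (0:ℝ) < 1 - l := by linarith [hl.2]
      rw [← ENNReal.ofReal_inv_of_pos h1]
      apply ENNReal.ofReal_le_ofReal
      have h2 : (1:ℝ) ≤ (1+l) + 4*(1-l) := by nlinarith [hl.1, hl.2]
      calc (1-l)⁻¹ = 1/(1-l) := (one_div _).symm
        _ ≤ ((1+l) + 4*(1-l))/(1-l) := (div_le_div_iff_of_pos_right h1).2 h2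
        _ = flim l + 4 := by unfold flim; field_simp
    exact lt_of_le_of_lt (le_trans hmono hKey) ENNReal.ofReal_lt_top
  · -- tendsto
    have hflim_int : Integrable flim μ := by
      refine ⟨meas_flim.aestronglyMeasurable, ?_⟩
      have hnn : 0 ≤ᵐ[μ] flim := by
        filter_upwards [hae] with l hl using flim_nonneg hl
      rw [hasFiniteIntegral_iff_ofReal hnn]
      apply lt_of_le_of_lt ?_ (lt_of_le_of_lt hKey ENNReal.ofReal_lt_top)
      apply lintegral_mono
      intro l
      exact ENNReal.ofReal_le_ofReal (by linarith)
    have hTend0 : Tendsto (fun n => ∫ l, fn n l ∂μ) atTop (𝓝 (∫ l, flim l ∂μ)) := by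
      apply tendsto_integral_of_dominated_convergence (fun l => flim l + 4)
        (fun n => (meas_fn n).aestronglyMeasurable)
        (hflim_int.add (integrable_const 4))
      · intro n
        filter_upwards [hae] with l hl
        rw [Real.norm_eq_abs]
        exact fn_abs_le hl
      · filter_upwards [hae] with l hl
        exact fn_tendsto hl
    have heq : (fun n : ℕ => ∫ l, fn n l ∂μ) =ᶠ[atTop] (fun n : ℕ => σsq n / n) := by
      filter_upwards [eventually_ge_atTop 1] with n hn
      exact (hσ n hn).symm
    have : ∫ l, (1 + l) / (1 - l) ∂μ = ∫ l, flim l ∂μ := rfl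
    rw [this]
    exact hTend0.congr' heq
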